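/- Let R and S be commutative rings and (r,s) ∈ R × S. Then every (R×S)-module map seemingly divisible by (r,s) is divisible by (r,s) if and only if both: every R-module map seemingly divisible by r is divisible by r, and every S-module map seemingly divisible by s is divisible by s. -/

import Mathlib

universe u

namespace Stmt3Aux

variable (R S : Type u) [CommRing R] [CommRing S]
variable (M : Type u) [AddCommGroup M] [Module (R × S) M]

lemma e1_mul (a : R × S) : ((1, 0) : R × S) * a = (a.1, 0) := by
  simp [Prod.ext_iff]

lemma e2_mul (a : R × S) : ((0, 1) : R × S) * a = (0, a.2) := by
  simp [Prod.ext_iff]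

/-- The `R`-part of an `R × S` module. -/
def part1 : Submodule (R × S) M where
  carrier := {x | ((1, 0) : R × S) • x = x}
  add_mem' := fun ha hb => by
    simp only [Set.mem_setOf_eq] at *; rw [smul_add, ha, hb]
  zero_mem' := smul_zero _
  smul_mem' := fun c x hx => by
    simp only [Set.mem_setOf_eq] at *; rw [smul_comm, hx]

/-- The `S`-part of an `R × S` module. -/
def part2 : Submodule (R × S) M where
  carrier := {x | ((0, 1) : R × S) • x = x}
  add_mem' := fun ha hb => by
    simp only [Set.mem_setOf_eq] at *; rw [smul_add, ha, hb]
  zero_mem' := smul_zero _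
  smul_mem' := fun c x hx => by
    simp only [Set.mem_setOf_eq] at *; rw [smul_comm, hx]

variable {R S M} in
lemma smul_part1 (a : R × S) {m : M} (hm : ((1, 0) : R × S) • m = m) :
    a • m = ((a.1, 0) : R × S) • m := by
  conv_lhs => rw [← hm, smul_smul, mul_comm, e1_mul]

variable {R S M} in
lemma smul_part2 (a : R × S) {m : M} (hm : ((0, 1) : R × S) • m = m) :
    a • m = ((0, a.2) : R × S) • m := by
  conv_lhs => rw [← hm, smul_smul, mul_comm, e2_mul]

instance : SMul R (part1 R S M) :=
  ⟨fun a x => ⟨((a, 0) : R × S) • x.1, by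
    show ((1, 0) : R × S) • _ = _
    rw [smul_smul, e1_mul]⟩⟩

lemma part1_smul_def (a : R) (x : part1 R S M) :
    (a • x).1 = ((a, 0) : R × S) • x.1 := rfl

instance : SMul S (part2 R S M) :=
  ⟨fun a x => ⟨((0, a) : R × S) • x.1, by
    show ((0, 1) : R × S) • _ = _
    rw [smul_smul, e2_mul]⟩⟩

lemma part2_smul_def (a : S) (x : part2 R S M) :
    (a • x).1 = ((0, a) : R × S) • x.1 := rfl

instance : Module R (part1 R S M) where
  one_smul x := Subtype.ext <| by rw [part1_smul_def]; exact x.2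
  mul_smul a b x := Subtype.ext <| by
    simp only [part1_smul_def, smul_smul, Prod.mk_mul_mk, mul_zero]
  smul_zero a := Subtype.ext <| by simp [part1_smul_def]
  smul_add a x y := Subtype.ext <| by
    simp [part1_smul_def, smul_add]
  add_smul a b x := Subtype.ext <| by
    simp only [part1_smul_def]
    rw [show ((a + b, (0 : S)) : R × S) = (a, 0) + (b, 0) by simp, add_smul]
    rfl
  zero_smul x := Subtype.ext <| by
    simp only [part1_smul_def]
    rw [show ((0 : R), (0 : S)) = (0 : R × S) from rfl, zero_smul]
    rfl

instance : Module S (part2 R S M) where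
  one_smul x := Subtype.ext <| by rw [part2_smul_def]; exact x.2
  mul_smul a b x := Subtype.ext <| by
    simp only [part2_smul_def, smul_smul, Prod.mk_mul_mk, mul_zero]
  smul_zero a := Subtype.ext <| by simp [part2_smul_def]
  smul_add a x y := Subtype.ext <| by
    simp [part2_smul_def, smul_add]
  add_smul a b x := Subtype.ext <| by
    simp only [part2_smul_def]
    rw [show (((0 : R), a + b) : R × S) = (0, a) + (0, b) by simp, add_smul]
    rfl
  zero_smul x := Subtype.ext <| by
    simp only [part2_smul_def]
    rw [show ((0 : R), (0 : S)) = (0 : R × S) from rfl, zero_smul]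
    rfl

variable (N : Type u) [AddCommGroup N] [Module (R × S) N]

/-- Restriction of an `R × S`-linear map to the `R`-parts. -/
def restrict1 (f : M →ₗ[R × S] N) : part1 R S M →ₗ[R] part1 R S N where
  toFun x := ⟨f x.1, by
    show ((1, 0) : R × S) • f x.1 = f x.1
    rw [← f.map_smul, x.2]⟩
  map_add' x y := Subtype.ext (f.map_add _ _)
  map_smul' a x := Subtype.ext <| by
    show f (((a, 0) : R × S) • x.1) = ((a, 0) : R × S) • f x.1
    exact f.map_smul _ _

/-- Restriction of an `R × S`-linear map to the `S`-parts. -/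
def restrict2 (f : M →ₗ[R × S] N) : part2 R S M →ₗ[S] part2 R S N where
  toFun x := ⟨f x.1, by
    show ((0, 1) : R × S) • f x.1 = f x.1
    rw [← f.map_smul, x.2]⟩
  map_add' x y := Subtype.ext (f.map_add _ _)
  map_smul' a x := Subtype.ext <| by
    show f (((0, a) : R × S) • x.1) = ((0, a) : R × S) • f x.1
    exact f.map_smul _ _

lemma mem_part1 (m : M) : ((1, 0) : R × S) • m ∈ part1 R S M := by
  show ((1, 0) : R × S) • _ = _
  rw [smul_smul, e1_mul]

lemma mem_part2 (m : M) : ((0, 1) : R × S) • m ∈ part2 R S M := by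
  show ((0, 1) : R × S) • _ = _
  rw [smul_smul, e2_mul]

/-- Glue maps on the two parts to a map on the whole module. -/
def glue (g₁ : part1 R S M →ₗ[R] part1 R S N) (g₂ : part2 R S M →ₗ[S] part2 R S N) :
    M →ₗ[R × S] N where
  toFun m := (g₁ ⟨((1, 0) : R × S) • m, mem_part1 R S M m⟩).1 +
    (g₂ ⟨((0, 1) : R × S) • m, mem_part2 R S M m⟩).1
  map_add' m m' := by
    have h1 : (⟨((1, 0) : R × S) • (m + m'), mem_part1 R S M _⟩ : part1 R S M) =
        ⟨((1, 0) : R × S) • m, mem_part1 R S M m⟩ + ⟨((1, 0) : R × S) • m', mem_part1 R S M m'⟩ :=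
      Subtype.ext (smul_add _ _ _)
    have h2 : (⟨((0, 1) : R × S) • (m + m'), mem_part2 R S M _⟩ : part2 R S M) =
        ⟨((0, 1) : R × S) • m, mem_part2 R S M m⟩ + ⟨((0, 1) : R × S) • m', mem_part2 R S M m'⟩ :=
      Subtype.ext (smul_add _ _ _)
    show (g₁ ⟨((1, 0) : R × S) • (m + m'), mem_part1 R S M _⟩).1 +
      (g₂ ⟨((0, 1) : R × S) • (m + m'), mem_part2 R S M _⟩).1 = _
    rw [h1, h2, map_add, map_add]
    push_cast
    abel
  map_smul' a m := by
    have h1 : (⟨((1, 0) : R × S) • (a • m), mem_part1 R S M _⟩ : part1 R S M) =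
        a.1 • ⟨((1, 0) : R × S) • m, mem_part1 R S M m⟩ := Subtype.ext <| by
      show ((1, 0) : R × S) • (a • m) = ((a.1, 0) : R × S) • (((1, 0) : R × S) • m)
      rw [smul_smul, smul_smul, e1_mul, mul_comm, e1_mul]
    have h2 : (⟨((0, 1) : R × S) • (a • m), mem_part2 R S M _⟩ : part2 R S M) =
        a.2 • ⟨((0, 1) : R × S) • m, mem_part2 R S M m⟩ := Subtype.ext <| by
      show ((0, 1) : R × S) • (a • m) = ((0, a.2) : R × S) • (((0, 1) : R × S) • m)
      rw [smul_smul, smul_smul, e2_mul, mul_comm, e2_mul]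
    show (g₁ ⟨((1, 0) : R × S) • (a • m), mem_part1 R S M _⟩).1 +
      (g₂ ⟨((0, 1) : R × S) • (a • m), mem_part2 R S M _⟩).1 = _
    rw [h1, h2, map_smul, map_smul]
    simp only [RingHom.id_apply, part1_smul_def, part2_smul_def]
    rw [smul_add, smul_part1 a (g₁ ⟨((1, 0) : R × S) • m, mem_part1 R S M m⟩).2,
      smul_part2 a (g₂ ⟨((0, 1) : R × S) • m, mem_part2 R S M m⟩).2]

end Stmt3Aux

open Stmt3Aux in
/-- For `(r, s) ∈ R × S`, every `(R × S)`-module map seemingly divisible by `(r, s)`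
is divisible by `(r, s)` iff the corresponding properties hold for `r` over `R` and
for `s` over `S`. -/
theorem stmt3 {R S : Type u} [CommRing R] [CommRing S] (r : R) (s : S) :
    (∀ (M N : Type u) [AddCommGroup M] [Module (R × S) M] [AddCommGroup N]
        [Module (R × S) N] (f : M →ₗ[R × S] N),
        (∀ m : M, (r, s) • m = 0 → f m = 0) → (∀ m : M, ∃ n : N, f m = (r, s) • n) →
        ∃ g : M →ₗ[R × S] N, f = (r, s) • g) ↔
    ((∀ (M N : Type u) [AddCommGroup M] [Module R M] [AddCommGroup N] [Module R N]
        (f : M →ₗ[R] N),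
        (∀ m : M, r • m = 0 → f m = 0) → (∀ m : M, ∃ n : N, f m = r • n) →
        ∃ g : M →ₗ[R] N, f = r • g) ∧
     (∀ (M N : Type u) [AddCommGroup M] [Module S M] [AddCommGroup N] [Module S N]
        (f : M →ₗ[S] N),
        (∀ m : M, s • m = 0 → f m = 0) → (∀ m : M, ∃ n : N, f m = s • n) →
        ∃ g : M →ₗ[S] N, f = s • g)) := by
  constructor
  · intro H
    constructor
    · intro M N _ _ _ _ f h1 h2
      letI : Module (R × S) M := Module.compHom M (RingHom.fst R S)
      letI : Module (R × S) N := Module.compHom N (RingHom.fst R S)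
      obtain ⟨g, hg⟩ := H M N
        { toFun := f, map_add' := f.map_add,
          map_smul' := fun a m => f.map_smul a.1 m }
        (fun m hm => h1 m hm) (fun m => h2 m)
      refine ⟨{ toFun := g, map_add' := g.map_add,
                map_smul' := fun a m => g.map_smul ((a, 1) : R × S) m }, ?_⟩
      ext m
      exact LinearMap.congr_fun hg m
    · intro M N _ _ _ _ f h1 h2
      letI : Module (R × S) M := Module.compHom M (RingHom.snd R S)
      letI : Module (R × S) N := Module.compHom N (RingHom.snd R S)
      obtain ⟨g, hg⟩ := H M N
        { toFun := f, map_add' := f.map_add,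
          map_smul' := fun a m => f.map_smul a.2 m }
        (fun m hm => h1 m hm) (fun m => h2 m)
      refine ⟨{ toFun := g, map_add' := g.map_add,
                map_smul' := fun a m => g.map_smul ((1, a) : R × S) m }, ?_⟩
      ext m
      exact LinearMap.congr_fun hg m
  · rintro ⟨hR, hS⟩ M N _ _ _ _ f h1 h2
    have hf1tor : ∀ x : part1 R S M, r • x = 0 → restrict1 R S M N f x = 0 := by
      intro x hx
      apply Subtype.ext
      show f x.1 = 0
      apply h1
      have hx' : ((r, 0) : R × S) • x.1 = 0 := congrArg Subtype.val hx
      rw [smul_part1 (r, s) x.2]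
      exact hx'
    have hf1div : ∀ x : part1 R S M, ∃ n : part1 R S N, restrict1 R S M N f x = r • n := by
      intro x
      obtain ⟨n, hn⟩ := h2 x.1
      refine ⟨⟨((1, 0) : R × S) • n, mem_part1 R S N n⟩, Subtype.ext ?_⟩
      show f x.1 = ((r, 0) : R × S) • (((1, 0) : R × S) • n)
      have hfx : ((1, 0) : R × S) • f x.1 = f x.1 := (restrict1 R S M N f x).2
      rw [smul_smul, mul_comm, e1_mul, ← hfx, hn, smul_smul, e1_mul]
    have hf2tor : ∀ x : part2 R S M, s • x = 0 → restrict2 R S M N f x = 0 := by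
      intro x hx
      apply Subtype.ext
      show f x.1 = 0
      apply h1
      have hx' : ((0, s) : R × S) • x.1 = 0 := congrArg Subtype.val hx
      rw [smul_part2 (r, s) x.2]
      exact hx'
    have hf2div : ∀ x : part2 R S M, ∃ n : part2 R S N, restrict2 R S M N f x = s • n := by
      intro x
      obtain ⟨n, hn⟩ := h2 x.1
      refine ⟨⟨((0, 1) : R × S) • n, mem_part2 R S N n⟩, Subtype.ext ?_⟩
      show f x.1 = ((0, s) : R × S) • (((0, 1) : R × S) • n)
      have hfx : ((0, 1) : R × S) • f x.1 = f x.1 := (restrict2 R S M N f x).2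
      rw [smul_smul, mul_comm, e2_mul, ← hfx, hn, smul_smul, e2_mul]
    obtain ⟨g₁, hg₁⟩ := hR _ _ (restrict1 R S M N f) hf1tor hf1div
    obtain ⟨g₂, hg₂⟩ := hS _ _ (restrict2 R S M N f) hf2tor hf2div
    refine ⟨glue R S M N g₁ g₂, ?_⟩
    ext m
    show f m = (r, s) • ((g₁ ⟨((1, 0) : R × S) • m, mem_part1 R S M m⟩).1 +
      (g₂ ⟨((0, 1) : R × S) • m, mem_part2 R S M m⟩).1)
    have hm : m = ((1, 0) : R × S) • m + ((0, 1) : R × S) • m := by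
      rw [← add_smul]
      norm_num
      exact (one_smul (R × S) m).symm
    have h₁ := congrArg Subtype.val
      (LinearMap.congr_fun hg₁ ⟨((1, 0) : R × S) • m, mem_part1 R S M m⟩)
    have h₂ := congrArg Subtype.val
      (LinearMap.congr_fun hg₂ ⟨((0, 1) : R × S) • m, mem_part2 R S M m⟩)
    rw [smul_add, smul_part1 (r, s) (g₁ _).2, smul_part2 (r, s) (g₂ _).2]
    conv_lhs => rw [hm]
    rw [map_add]
    exact congrArg₂ (· + ·) h₁ h₂
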